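/- Let S be a symmetric positive-definite n×n matrix and C an m×n matrix with CCᵀ invertible. Then S' = CᵀC + QᵀSQ, with Q = I − Cᵀ(CCᵀ)⁻¹C, is symmetric positive definite. -/

import Mathlib

open Matrix

/-- If `S` is symmetric positive definite and `C` has `C Cᵀ` invertible
(full row rank), then `S' = CᵀC + QᵀSQ` with `Q = I − Cᵀ(CCᵀ)⁻¹C` is
symmetric positive definite. -/
theorem modified_hessian_posDef (m n : ℕ) (S : Matrix (Fin n) (Fin n) ℝ)
    (hS : S.PosDef) (C : Matrix (Fin m) (Fin n) ℝ)
    (h : IsUnit (C * Cᵀ).det)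
    (Q : Matrix (Fin n) (Fin n) ℝ) (hQ : Q = 1 - Cᵀ * (C * Cᵀ)⁻¹ * C) :
    (Cᵀ * C + Qᵀ * S * Q).PosDef := by
  have h1 : (Cᵀ * C).PosSemidef := by
    rw [← conjTranspose_eq_transpose_of_trivial]
    exact posSemidef_conjTranspose_mul_self C
  have h2 : (Qᵀ * S * Q).PosSemidef := by
    rw [← conjTranspose_eq_transpose_of_trivial]
    exact hS.posSemidef.conjTranspose_mul_mul_same Q
  refine posDef_iff_dotProduct_mulVec.mpr ⟨h1.1.add h2.1, fun x hx => ?_⟩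
  have hsplit : star x ⬝ᵥ ((Cᵀ * C + Qᵀ * S * Q) *ᵥ x)
      = (C *ᵥ x) ⬝ᵥ (C *ᵥ x) + (Q *ᵥ x) ⬝ᵥ (S *ᵥ (Q *ᵥ x)) := by
    rw [add_mulVec, dotProduct_add]
    congr 1
    · rw [← mulVec_mulVec]
      simp [dotProduct_mulVec, ← vecMul_vecMul, vecMul_transpose]
    · rw [← mulVec_mulVec, ← mulVec_mulVec]
      simp [dotProduct_mulVec, ← vecMul_vecMul, vecMul_transpose]
  rw [hsplit]
  by_cases hc : C *ᵥ x = 0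
  · have hQx : Q *ᵥ x = x := by
      subst hQ
      rw [sub_mulVec, one_mulVec, ← mulVec_mulVec, ← mulVec_mulVec, hc,
        mulVec_zero, mulVec_zero, sub_zero]
    rw [hQx, hc]
    have := hS.dotProduct_mulVec_pos hx
    simpa using this
  · have hpos : 0 < (C *ᵥ x) ⬝ᵥ (C *ᵥ x) := by
      rcases lt_or_eq_of_le (dotProduct_self_star_nonneg (C *ᵥ x)) with h' | h'
      · simpa using h'
      · exact absurd (dotProduct_self_star_eq_zero.mp h'.symm) hc
    have hge : 0 ≤ (Q *ᵥ x) ⬝ᵥ (S *ᵥ (Q *ᵥ x)) := by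
      have := hS.posSemidef.dotProduct_mulVec_nonneg (Q *ᵥ x)
      simpa using this
    linarith
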